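/- Let K ≥ 1 be an integer and let α₁, …, α_K > 0 with ∑_{k=1}^K α_k = 1 and θ₁, …, θ_K ∈ (0,1). For each k, let β_k, γ_k: ℝ≥0 → [0,1] be such that P_k(c) = (1−β_k(c)−γ_k(c))θ_k + γ_k(c) satisfies 0 < P_k(c) < 1 for all c ≥ 0, and define I_k(c) = (1−β_k(c)−γ_k(c))²/(P_k(c)(1−P_k(c))). Assume each I_k is nondecreasing and there exist c_k** > 0 and p_k* > 0 with I_k(c_k**) = c_k**/p_k* and p_k*·I_k(c) ≤ c for all c ≥ 0. For C > 0 define V(C) as the infimum, over all K-tuples of finite cost lists (c_i^k ≥ 0, 1 ≤ i ≤ m_k) with ∑_{k,i} c_i^k ≤ C and ∑_i I_k(c_i^k) > 0 for each k, of ∑_{k=1}^K α_k² / (∑_{i=1}^{m_k} I_k(c_i^k)). Then lim_{C→∞} C·V(C) = (∑_{k=1}^K α_k·√(p_k*))². -/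

import Mathlib

/-- Optimal polling theorem: with `K` demographic groups of weights `α k` and support
fractions `θv k`, cost-dependent distortion probabilities `β k c`, `γ k c`, and per-response
Fisher information `I k c`, the smallest achievable Cramér–Rao bound `V C` under total
polling budget `C` satisfies `C · V C → (∑ α k √(pstar k))²` as `C → ∞`. -/
theorem optimal_polling (K : ℕ) (hK : 1 ≤ K)
    (α θv : Fin K → ℝ)
    (hα : ∀ k, 0 < α k) (hαsum : (∑ k, α k) = 1)
    (hθv : ∀ k, θv k ∈ Set.Ioo (0:ℝ) 1)
    (β γ : Fin K → ℝ → ℝ)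
    (hβ : ∀ k c, 0 ≤ c → β k c ∈ Set.Icc (0:ℝ) 1)
    (hγ : ∀ k c, 0 ≤ c → γ k c ∈ Set.Icc (0:ℝ) 1)
    (Pk : Fin K → ℝ → ℝ)
    (hPk : ∀ k c, Pk k c = (1 - β k c - γ k c) * θv k + γ k c)
    (hPkmem : ∀ k c, 0 ≤ c → Pk k c ∈ Set.Ioo (0:ℝ) 1)
    (I : Fin K → ℝ → ℝ)
    (hI : ∀ k c, I k c = (1 - β k c - γ k c)^2 / (Pk k c * (1 - Pk k c)))
    (hImono : ∀ k, MonotoneOn (I k) (Set.Ici (0:ℝ)))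
    (cstar pstar : Fin K → ℝ)
    (hcstar : ∀ k, 0 < cstar k) (hpstar : ∀ k, 0 < pstar k)
    (hIeq : ∀ k, I k (cstar k) = cstar k / pstar k)
    (hIle : ∀ k c, 0 ≤ c → pstar k * I k c ≤ c)
    (V : ℝ → ℝ)
    (hV : ∀ C : ℝ, V C = sInf {y : ℝ |
      ∃ (m : Fin K → ℕ) (c : (k : Fin K) → Fin (m k) → ℝ),
        (∀ k i, 0 ≤ c k i) ∧ (∑ k, ∑ i, c k i) ≤ C ∧
        (∀ k, 0 < ∑ i, I k (c k i)) ∧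
        y = ∑ k, (α k)^2 / (∑ i, I k (c k i))}) :
    Filter.Tendsto (fun C : ℝ => C * V C) Filter.atTop
      (nhds ((∑ k, α k * Real.sqrt (pstar k))^2)) := by
  classical
  have hne : Nonempty (Fin K) := ⟨⟨0, hK⟩⟩
  have hsqrt : ∀ k, 0 < Real.sqrt (pstar k) := fun k => Real.sqrt_pos.2 (hpstar k)
  set S := ∑ k, α k * Real.sqrt (pstar k) with hSdef
  have hS : 0 < S :=
    Finset.sum_pos (fun k _ => mul_pos (hα k) (hsqrt k)) Finset.univ_nonempty
  set lam : Fin K → ℝ := fun k => α k * Real.sqrt (pstar k) / S with hlamdef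
  have hlam : ∀ k, 0 < lam k := fun k => div_pos (mul_pos (hα k) (hsqrt k)) hS
  have hlamsum : (∑ k, lam k) = 1 := by
    simp only [hlamdef]
    rw [← Finset.sum_div, ← hSdef, div_self hS.ne']
  have hIcs : ∀ k, 0 < I k (cstar k) := fun k => by
    rw [hIeq k]; exact div_pos (hcstar k) (hpstar k)
  -- the feasible set
  let A : ℝ → Set ℝ := fun C => {y : ℝ |
      ∃ (m : Fin K → ℕ) (c : (k : Fin K) → Fin (m k) → ℝ),
        (∀ k i, 0 ≤ c k i) ∧ (∑ k, ∑ i, c k i) ≤ C ∧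
        (∀ k, 0 < ∑ i, I k (c k i)) ∧
        y = ∑ k, (α k)^2 / (∑ i, I k (c k i))}
  have hV' : ∀ C : ℝ, V C = sInf (A C) := hV
  have hA0 : ∀ C y, y ∈ A C → 0 ≤ y := by
    rintro C y ⟨m, c, hc0, hcs, hJ, rfl⟩
    exact Finset.sum_nonneg fun k _ => div_nonneg (sq_nonneg _) (hJ k).le
  have hbdd : ∀ C, BddBelow (A C) := fun C => ⟨0, fun y hy => hA0 C y hy⟩
  -- lower bound on every feasible value, via Cauchy-Schwarz
  have key : ∀ C : ℝ, 0 < C → ∀ y ∈ A C, S^2 / C ≤ y := by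
    rintro C hC y ⟨m, c, hc0, hcsum, hJ, rfl⟩
    set J : Fin K → ℝ := fun k => ∑ i, I k (c k i) with hJdef
    have hpJ : ∀ k, pstar k * J k ≤ ∑ i, c k i := by
      intro k
      simp only [hJdef]
      rw [Finset.mul_sum]
      exact Finset.sum_le_sum fun i _ => hIle k (c k i) (hc0 k i)
    have hsum_le : (∑ k, pstar k * J k) ≤ C :=
      le_trans (Finset.sum_le_sum fun k _ => hpJ k) hcsum
    have hpos : 0 < ∑ k, pstar k * J k :=
      Finset.sum_pos (fun k _ => mul_pos (hpstar k) (hJ k)) Finset.univ_nonempty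
    have hCS : (∑ k, α k * Real.sqrt (pstar k))^2 / (∑ k, pstar k * J k)
        ≤ ∑ k, (α k * Real.sqrt (pstar k))^2 / (pstar k * J k) :=
      Finset.sq_sum_div_le_sum_sq_div _ _ (fun k _ => mul_pos (hpstar k) (hJ k))
    have heq : ∀ k, (α k * Real.sqrt (pstar k))^2 / (pstar k * J k) = (α k)^2 / J k := by
      intro k
      have hp := (hpstar k).ne'
      have hJk := (hJ k).ne'
      rw [mul_pow, Real.sq_sqrt (hpstar k).le]
      field_simp
    calc S^2 / C ≤ S^2 / (∑ k, pstar k * J k) := by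
          apply div_le_div_of_nonneg_left (sq_nonneg S) hpos hsum_le
      _ ≤ ∑ k, (α k)^2 / J k := by
          rw [hSdef]
          refine le_trans hCS (le_of_eq (Finset.sum_congr rfl fun k _ => heq k))
  -- eventual condition
  have hev : ∀ᶠ C : ℝ in Filter.atTop, ∀ k, 2 * cstar k ≤ lam k * C := by
    rw [Filter.eventually_all]
    intro k
    have h1 : Filter.Tendsto (fun C : ℝ => lam k * C) Filter.atTop Filter.atTop :=
      (Filter.tendsto_const_mul_atTop_of_pos (hlam k)).2 Filter.tendsto_id
    exact h1.eventually_ge_atTop (2 * cstar k)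
  -- the main eventual two-sided bound
  have hmain : ∀ᶠ C : ℝ in Filter.atTop,
      S^2 ≤ C * V C ∧
      C * V C ≤ ∑ k, (α k)^2 * pstar k * (C / (lam k * C - cstar k)) := by
    filter_upwards [hev, Filter.eventually_gt_atTop 0] with C hC2 hCpos
    set m : Fin K → ℕ := fun k => ⌊lam k * C / cstar k⌋₊ with hm
    have hx2 : ∀ k, (2:ℝ) ≤ lam k * C / cstar k := by
      intro k
      rw [le_div_iff₀ (hcstar k)]
      linarith [hC2 k]
    have hm1 : ∀ k, 1 ≤ m k := by
      intro k
      exact Nat.le_floor (by push_cast; linarith [hx2 k])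
    have hfl : ∀ k, (m k : ℝ) * cstar k ≤ lam k * C := by
      intro k
      have h1 : (m k : ℝ) ≤ lam k * C / cstar k :=
        Nat.floor_le (div_nonneg (mul_nonneg (hlam k).le hCpos.le) (hcstar k).le)
      calc (m k : ℝ) * cstar k ≤ (lam k * C / cstar k) * cstar k := by
            exact mul_le_mul_of_nonneg_right h1 (hcstar k).le
        _ = lam k * C := div_mul_cancel₀ _ (hcstar k).ne'
    have hfg : ∀ k, lam k * C - cstar k ≤ (m k : ℝ) * cstar k := by
      intro k
      have h1 : lam k * C / cstar k - 1 < (m k : ℝ) := Nat.sub_one_lt_floor _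
      have h2 : (lam k * C / cstar k - 1) * cstar k ≤ (m k : ℝ) * cstar k :=
        mul_le_mul_of_nonneg_right h1.le (hcstar k).le
      calc lam k * C - cstar k = (lam k * C / cstar k - 1) * cstar k := by
            rw [sub_mul, one_mul, div_mul_cancel₀ _ (hcstar k).ne']
        _ ≤ (m k : ℝ) * cstar k := h2
    have hden : ∀ k, 0 < lam k * C - cstar k := by
      intro k
      have := hC2 k
      have := hcstar k
      linarith
    have hmpos : ∀ k, (0:ℝ) < (m k : ℝ) := by
      intro k
      exact_mod_cast Nat.lt_of_lt_of_le Nat.zero_lt_one (hm1 k)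
    have hsumI : ∀ k, (∑ _i : Fin (m k), I k (cstar k)) = (m k : ℝ) * I k (cstar k) := by
      intro k
      rw [Finset.sum_const, Finset.card_univ, Fintype.card_fin, nsmul_eq_mul]
    have hJk : ∀ k, (0:ℝ) < ∑ _i : Fin (m k), I k (cstar k) := by
      intro k
      rw [hsumI k]
      exact mul_pos (hmpos k) (hIcs k)
    have hcost : (∑ k, ∑ _i : Fin (m k), cstar k) ≤ C := by
      calc (∑ k, ∑ _i : Fin (m k), cstar k) = ∑ k, (m k : ℝ) * cstar k := by
            refine Finset.sum_congr rfl fun k _ => ?_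
            rw [Finset.sum_const, Finset.card_univ, Fintype.card_fin, nsmul_eq_mul]
        _ ≤ ∑ k, lam k * C := Finset.sum_le_sum fun k _ => hfl k
        _ = C := by rw [← Finset.sum_mul, hlamsum, one_mul]
    have hmem : (∑ k, (α k)^2 / (∑ _i : Fin (m k), I k (cstar k))) ∈ A C :=
      ⟨m, fun k _ => cstar k, fun k _ => (hcstar k).le, hcost, hJk, rfl⟩
    constructor
    · -- lower bound
      have hVge : S^2 / C ≤ V C := by
        rw [hV' C]
        exact le_csInf ⟨_, hmem⟩ (fun y hy => key C hCpos y hy)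
      calc S^2 = C * (S^2 / C) := by field_simp
        _ ≤ C * V C := mul_le_mul_of_nonneg_left hVge hCpos.le
    · -- upper bound
      have hVle : V C ≤ ∑ k, (α k)^2 * pstar k / ((m k : ℝ) * cstar k) := by
        rw [hV' C]
        refine le_trans (csInf_le (hbdd C) hmem) (le_of_eq ?_)
        refine Finset.sum_congr rfl fun k _ => ?_
        rw [hsumI k, hIeq k]
        have h1 := (hpstar k).ne'
        have h2 := (hcstar k).ne'
        have h3 := (hmpos k).ne'
        field_simp
      calc C * V C ≤ C * ∑ k, (α k)^2 * pstar k / ((m k : ℝ) * cstar k) :=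
            mul_le_mul_of_nonneg_left hVle hCpos.le
        _ = ∑ k, (α k)^2 * pstar k * (C / ((m k : ℝ) * cstar k)) := by
            rw [Finset.mul_sum]
            exact Finset.sum_congr rfl fun k _ => by ring
        _ ≤ ∑ k, (α k)^2 * pstar k * (C / (lam k * C - cstar k)) := by
            refine Finset.sum_le_sum fun k _ => ?_
            have h1 : 0 ≤ (α k)^2 * pstar k := mul_nonneg (sq_nonneg _) (hpstar k).le
            refine mul_le_mul_of_nonneg_left ?_ h1
            exact div_le_div_of_nonneg_left hCpos.le (hden k) (hfg k)
  -- limit of the upper bound function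
  have hu : Filter.Tendsto (fun C : ℝ => ∑ k, (α k)^2 * pstar k * (C / (lam k * C - cstar k)))
      Filter.atTop (nhds (S^2)) := by
    have hterm : ∀ k : Fin K, Filter.Tendsto
        (fun C : ℝ => (α k)^2 * pstar k * (C / (lam k * C - cstar k)))
        Filter.atTop (nhds ((α k)^2 * pstar k * (lam k)⁻¹)) := by
      intro k
      refine Filter.Tendsto.const_mul _ ?_
      have h2 : Filter.Tendsto (fun C : ℝ => cstar k / C) Filter.atTop (nhds 0) :=
        Filter.Tendsto.div_atTop tendsto_const_nhds Filter.tendsto_id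
      have h1 : Filter.Tendsto (fun C : ℝ => lam k - cstar k / C) Filter.atTop (nhds (lam k)) := by
        simpa using tendsto_const_nhds.sub h2
      have h3 := h1.inv₀ (hlam k).ne'
      refine Filter.Tendsto.congr' ?_ h3
      filter_upwards [Filter.eventually_gt_atTop 0] with C hC
      rw [show lam k - cstar k / C = (lam k * C - cstar k) / C by field_simp, inv_div]
    have hsum := tendsto_finset_sum Finset.univ (fun k _ => hterm k)
    have hval : (∑ k, (α k)^2 * pstar k * (lam k)⁻¹) = S^2 := by
      have hps : ∀ k, Real.sqrt (pstar k) * Real.sqrt (pstar k) = pstar k :=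
        fun k => Real.mul_self_sqrt (hpstar k).le
      have hterm2 : ∀ k, (α k)^2 * pstar k * (lam k)⁻¹ = (α k * Real.sqrt (pstar k)) * S := by
        intro k
        simp only [hlamdef]
        rw [inv_div, ← hps k]
        rw [Real.sqrt_mul_self (Real.sqrt_nonneg _)]
        have h1 := (hα k).ne'
        have h2 := (hsqrt k).ne'
        field_simp
      rw [Finset.sum_congr rfl fun k _ => hterm2 k, ← Finset.sum_mul, ← hSdef, sq]
    rw [← hval]
    exact hsum
  -- squeeze
  refine tendsto_of_tendsto_of_tendsto_of_le_of_le' tendsto_const_nhds hu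
    (hmain.mono fun C h => h.1) (hmain.mono fun C h => h.2)
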